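/- arXiv:1802.06511 — 2 statements merged into one kernel-verified Lean document; each statement's English description precedes it below -/
import Mathlib

section
/- Let G be an interval graph and let S and S' be distinct c-colorable sets of size at least k, neither of which is locked in G. If exactly one of S and S' is locked in G[S ∪ S'], then the minimum length of a TAR(k)-reconfiguration sequence between S and S' equals |S △ S'| + 2. -/
open Finset

variable {V : Type*}

/-- `S` is a `c`-colorable vertex set in `G`. -/
def ColSet (G : SimpleGraph V) (c : ℕ) (S : Finset V) : Prop :=
  (G.induce (S : Set V)).Colorable c

/-- One TAR(k) step between `c`-colorable sets. -/
def TARStep (G : SimpleGraph V) (c k : ℕ) [DecidableEq V] (A B : Finset V) : Prop :=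
  ColSet G c A ∧ ColSet G c B ∧ k ≤ A.card ∧ k ≤ B.card ∧ (symmDiff A B).card = 1

/-- One TJ step between `c`-colorable sets. -/
def TJStep (G : SimpleGraph V) (c : ℕ) [DecidableEq V] (A B : Finset V) : Prop :=
  ColSet G c A ∧ ColSet G c B ∧ (A \ B).card = 1 ∧ (B \ A).card = 1

/-- `l` is a TAR(k)-reconfiguration sequence from `S` to `S'`. -/
def TARSeq (G : SimpleGraph V) (c k : ℕ) [DecidableEq V] (S S' : Finset V)
    (l : List (Finset V)) : Prop :=
  l.head? = some S ∧ l.getLast? = some S' ∧ l.Chain' (TARStep G c k)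

def TJSeq (G : SimpleGraph V) (c : ℕ) [DecidableEq V] (S S' : Finset V)
    (l : List (Finset V)) : Prop :=
  l.head? = some S ∧ l.getLast? = some S' ∧ l.Chain' (TJStep G c)

def TARReach (G : SimpleGraph V) (c k : ℕ) [DecidableEq V] (S S' : Finset V) : Prop :=
  ∃ l, TARSeq G c k S S' l

def TJReach (G : SimpleGraph V) (c : ℕ) [DecidableEq V] (S S' : Finset V) : Prop :=
  ∃ l, TJSeq G c S S' l

/-- Length of a shortest TAR(k)-sequence (number of steps), `⊤` if none exists. -/
noncomputable def TARDist (G : SimpleGraph V) (c k : ℕ) [DecidableEq V]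
    (S S' : Finset V) : ℕ∞ :=
  sInf {n : ℕ∞ | ∃ l, TARSeq G c k S S' l ∧ (l.length : ℕ∞) = n + 1}

noncomputable def TJDist (G : SimpleGraph V) (c : ℕ) [DecidableEq V]
    (S S' : Finset V) : ℕ∞ :=
  sInf {n : ℕ∞ | ∃ l, TJSeq G c S S' l ∧ (l.length : ℕ∞) = n + 1}

/-- `S` is a maximal `c`-colorable set among subsets of `U`, of size exactly `k`
(`S` is "locked" in `G[U]`). -/
def LockedIn (G : SimpleGraph V) (c k : ℕ) (U S : Finset V) : Prop :=
  S.card = k ∧ ColSet G c S ∧ S ⊆ U ∧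
    ∀ T ⊆ U, ColSet G c T → S ⊆ T → T = S

/-- `S` is locked in `G` itself. -/
def Locked [Fintype V] (G : SimpleGraph V) (c k : ℕ) (S : Finset V) : Prop :=
  LockedIn G c k Finset.univ S

/-- `G` is an interval graph. -/
def IsIntervalGraph (G : SimpleGraph V) : Prop :=
  ∃ l r : V → ℝ, (∀ v, l v ≤ r v) ∧
    ∀ u v, G.Adj u v ↔ u ≠ v ∧ max (l u) (l v) ≤ min (r u) (r v)

/-- `G` is perfect: every induced subgraph has chromatic number equal to its
clique number, stated via the colorability/clique-free characterization. -/
def IsPerfect (G : SimpleGraph V) : Prop :=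
  ∀ (S : Set V) (c : ℕ), (G.induce S).Colorable c ↔ (G.induce S).CliqueFree (c + 1)
section Cov
variable [DecidableEq V] (l r : V → ℝ) (c : ℕ)

/-- coverage bound -/
def CovOK (X : Finset V) : Prop :=
  ∀ p : ℝ, (X.filter (fun v => l v ≤ p ∧ p ≤ r v)).card ≤ c

lemma covOK_mono {X Y : Finset V} (h : X ⊆ Y) (hY : CovOK l r c Y) : CovOK l r c X := by
  intro p
  exact le_trans (Finset.card_le_card (Finset.filter_subset_filter _ h)) (hY p)

variable (G : SimpleGraph V)
  (hlr : ∀ v, l v ≤ r v)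
  (hadj : ∀ u v, G.Adj u v ↔ u ≠ v ∧ max (l u) (l v) ≤ min (r u) (r v))

include hadj in
lemma covOK_of_colSet {X : Finset V} (h : ColSet G c X) : CovOK l r c X := by
  obtain ⟨C⟩ := h
  intro p
  classical
  have : ((X.filter (fun v => l v ≤ p ∧ p ≤ r v)).attach).card ≤ (Finset.univ : Finset (Fin c)).card := by
    apply Finset.card_le_card_of_injOn
      (fun u => C ⟨u.1, by
        have := u.2; exact Finset.mem_coe.mpr (Finset.mem_of_mem_filter _ this)⟩)
      (fun _ _ => Finset.mem_univ _)
    · rintro ⟨u, hu⟩ - ⟨v, hv⟩ - hC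
      simp only [Subtype.mk.injEq]
      by_contra hne
      have hu' := Finset.mem_filter.mp hu
      have hv' := Finset.mem_filter.mp hv
      have hAdj : G.Adj u v := by
        rw [hadj]
        exact ⟨hne, max_le
          (le_min (le_trans hu'.2.1 hu'.2.2) (le_trans hu'.2.1 hv'.2.2))
          (le_min (le_trans hv'.2.1 hu'.2.2) (le_trans hv'.2.1 hv'.2.2))⟩
      have : (G.induce (X : Set V)).Adj ⟨u, Finset.mem_coe.mpr hu'.1⟩ ⟨v, Finset.mem_coe.mpr hv'.1⟩ := by
        simpa [SimpleGraph.induce] using hAdj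
      exact C.valid this hC
  simpa using this

include hlr hadj in
lemma colSet_of_covOK {X : Finset V} (h : CovOK l r c X) : ColSet G c X := by
  classical
  suffices H : ∀ n (X : Finset V), X.card ≤ n → CovOK l r c X → ColSet G c X from
    H X.card X le_rfl h
  clear h X
  intro n
  induction n with
  | zero =>
    intro X hn h
    have hX : X = ∅ := Finset.card_eq_zero.mp (Nat.le_zero.mp hn)
    subst hX
    exact ⟨SimpleGraph.Coloring.mk (fun v => absurd v.2 (by simp))
      (fun {v} _ _ => absurd v.2 (by simp))⟩
  | succ n IH =>
    intro X hn h
    rcases Finset.eq_empty_or_nonempty X with rfl | hne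
    · exact ⟨SimpleGraph.Coloring.mk (fun v => absurd v.2 (by simp))
        (fun {v} _ _ => absurd v.2 (by simp))⟩
    obtain ⟨v, hvX, hvmax⟩ := Finset.exists_max_image X l hne
    set X' := X.erase v with hX'
    have hsub : X' ⊆ X := Finset.erase_subset _ _
    have hcard : X'.card ≤ n := by
      rw [hX', Finset.card_erase_of_mem hvX]
      omega
    obtain ⟨C'⟩ : ColSet G c X' :=
      IH X' hcard (covOK_mono l r c hsub h)
    -- neighbors of v in X'
    set N := X'.filter (fun u => G.Adj u v) with hN
    have hNF : insert v N ⊆ X.filter (fun u => l u ≤ l v ∧ l v ≤ r u) := by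
      intro u hu
      rcases Finset.mem_insert.mp hu with rfl | hu
      · exact Finset.mem_filter.mpr ⟨hvX, le_refl _, hlr _⟩
      · have hu' := Finset.mem_filter.mp hu
        have hadj' := (hadj u v).mp hu'.2
        refine Finset.mem_filter.mpr ⟨hsub hu'.1, hvmax u (hsub hu'.1), ?_⟩
        calc l v ≤ max (l u) (l v) := le_max_right _ _
          _ ≤ min (r u) (r v) := hadj'.2
          _ ≤ r u := min_le_left _ _
    have hvN : v ∉ N := fun hv => Finset.notMem_erase v X (Finset.mem_filter.mp hv).1
    have hNcard : N.card < c := by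
      have h1 : (insert v N).card ≤ c := le_trans (Finset.card_le_card hNF) (h (l v))
      rw [Finset.card_insert_of_notMem hvN] at h1
      omega
    -- a fresh color
    have : ∃ k₀ : Fin c, k₀ ∉ N.attach.image (fun u => C' ⟨u.1, Finset.mem_coe.mpr ((Finset.mem_filter.mp u.2).1)⟩) := by
      by_contra hc
      push_neg at hc
      have hsub' : (Finset.univ : Finset (Fin c)) ⊆ _ := fun x _ => hc x
      have := Finset.card_le_card hsub'
      have h2 : (N.attach.image (fun u => C' ⟨u.1, Finset.mem_coe.mpr ((Finset.mem_filter.mp u.2).1)⟩)).card ≤ N.card := by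
        calc _ ≤ N.attach.card := Finset.card_image_le
          _ = N.card := Finset.card_attach
      simp only [Finset.card_univ, Fintype.card_fin] at this
      omega
    obtain ⟨k₀, hk₀⟩ := this
    refine ⟨SimpleGraph.Coloring.mk
      (fun u => if hu : u.1 = v then k₀ else C' ⟨u.1, Finset.mem_coe.mpr (Finset.mem_erase.mpr ⟨hu, Finset.mem_coe.mp u.2⟩)⟩) ?_⟩
    rintro ⟨a, ha⟩ ⟨b, hb⟩ hAB
    have hAdj : G.Adj a b := hAB
    have hne' : a ≠ b := ((hadj a b).mp hAdj).1
    by_cases h1 : a = v <;> by_cases h2 : b = v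
    · exact absurd (h1.trans h2.symm) hne'
    · simp only [dif_pos h1, dif_neg h2]
      intro hEq
      apply hk₀
      have hbN : b ∈ N := Finset.mem_filter.mpr
        ⟨Finset.mem_erase.mpr ⟨h2, Finset.mem_coe.mp hb⟩, (h1 ▸ hAdj).symm⟩
      rw [hEq]
      exact Finset.mem_image.mpr ⟨⟨b, hbN⟩, Finset.mem_attach _ _, rfl⟩
    · simp only [dif_neg h1, dif_pos h2]
      intro hEq
      apply hk₀
      have haN : a ∈ N := Finset.mem_filter.mpr
        ⟨Finset.mem_erase.mpr ⟨h1, Finset.mem_coe.mp ha⟩, h2 ▸ hAdj⟩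
      rw [← hEq]
      exact Finset.mem_image.mpr ⟨⟨a, haN⟩, Finset.mem_attach _ _, rfl⟩
    · simp only [dif_neg h1, dif_neg h2]
      have : (G.induce (X' : Set V)).Adj
          ⟨a, Finset.mem_coe.mpr (Finset.mem_erase.mpr ⟨h1, Finset.mem_coe.mp ha⟩)⟩
          ⟨b, Finset.mem_coe.mpr (Finset.mem_erase.mpr ⟨h2, Finset.mem_coe.mp hb⟩)⟩ := hAdj
      exact C'.valid this

end Cov

section Symm
variable [DecidableEq V]

lemma symmDiff_singleton_mem {u : V} {Q : Finset V} (h : u ∈ Q) :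
    symmDiff {u} Q = Q.erase u := by
  ext x
  simp only [Finset.mem_symmDiff, Finset.mem_singleton, Finset.mem_erase]
  constructor
  · rintro (⟨rfl, hx⟩ | ⟨hx, hne⟩)
    · exact absurd h hx
    · exact ⟨fun he => hne (he ▸ rfl), hx⟩
  · rintro ⟨hne, hx⟩
    exact Or.inr ⟨hx, fun he => hne (by simpa using he)⟩

lemma symmDiff_singleton_not_mem {u : V} {Q : Finset V} (h : u ∉ Q) :
    symmDiff {u} Q = insert u Q := by
  ext x
  simp only [Finset.mem_symmDiff, Finset.mem_singleton, Finset.mem_insert]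
  constructor
  · rintro (⟨rfl, hx⟩ | ⟨hx, hne⟩)
    · exact Or.inl rfl
    · exact Or.inr hx
  · rintro (rfl | hx)
    · exact Or.inl ⟨rfl, h⟩
    · exact Or.inr ⟨hx, fun he => h (he ▸ hx)⟩

lemma symmDiff_trans_eq (X Y Z : Finset V) :
    symmDiff X Z = symmDiff (symmDiff X Y) (symmDiff Y Z) := by
  rw [symmDiff_assoc, symmDiff_symmDiff_cancel_left]

/-- one TAR step changes the symmetric difference with any fixed set by exactly one -/
lemma step_symmDiff {X Y Z : Finset V} (h : (symmDiff X Y).card = 1) :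
    (symmDiff X Z).card = (symmDiff Y Z).card + 1 ∨
    (symmDiff X Z).card + 1 = (symmDiff Y Z).card := by
  obtain ⟨u, hu⟩ := Finset.card_eq_one.mp h
  have hXZ : symmDiff X Z = symmDiff {u} (symmDiff Y Z) := by
    rw [symmDiff_trans_eq X Y Z, hu]
  by_cases hm : u ∈ symmDiff Y Z
  · right
    rw [hXZ, symmDiff_singleton_mem hm, Finset.card_erase_of_mem hm]
    have : 1 ≤ (symmDiff Y Z).card := Finset.card_pos.mpr ⟨u, hm⟩
    omega
  · left
    rw [hXZ, symmDiff_singleton_not_mem hm, Finset.card_insert_of_notMem hm]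

lemma symmDiff_card_eq_zero {X Y : Finset V} (h : (symmDiff X Y).card = 0) : X = Y := by
  have h2 : symmDiff X Y = ∅ := Finset.card_eq_zero.mp h
  rw [← Finset.bot_eq_empty] at h2
  exact symmDiff_eq_bot.mp h2

end Symm

section Parity
variable [DecidableEq V] (G : SimpleGraph V) (c k : ℕ)

lemma tarStep_symm {A B : Finset V} (h : TARStep G c k A B) : TARStep G c k B A :=
  ⟨h.2.1, h.1, h.2.2.2.1, h.2.2.1, by rw [symmDiff_comm]; exact h.2.2.2.2⟩

/-- parity lemma: any TAR chain from X to Y has length |X △ Y| + 2m + 1 -/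
lemma tar_parity : ∀ (L : List (Finset V)) (X Y : Finset V),
    L.Chain' (TARStep G c k) → L.head? = some X → L.getLast? = some Y →
    ∃ m, L.length = (symmDiff X Y).card + 2*m + 1 := by
  intro L
  induction L with
  | nil => intro X Y _ hh _; simp at hh
  | cons X₀ t IH =>
    intro X Y hch hh hlast
    have hX : X₀ = X := by simpa using hh
    subst hX
    cases t with
    | nil =>
      have hY : X₀ = Y := by simpa using hlast
      subst hY
      exact ⟨0, by simp [symmDiff_self]⟩
    | cons X₂ t₂ =>
      have hch' : (X₂ :: t₂).Chain' (TARStep G c k) := hch.tail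
      have hstep : TARStep G c k X₀ X₂ := by
        rcases List.isChain_cons_cons.mp hch with ⟨h1, _⟩
        exact h1
      have hlast' : (X₂ :: t₂).getLast? = some Y := by
        rwa [List.getLast?_cons_cons] at hlast
      obtain ⟨m, hm⟩ := IH X₂ Y hch' rfl hlast'
      rcases step_symmDiff (Z := Y) hstep.2.2.2.2 with h' | h'
      · refine ⟨m, ?_⟩
        simp only [List.length_cons] at hm ⊢
        omega
      · refine ⟨m+1, ?_⟩
        simp only [List.length_cons] at hm ⊢
        omega

end Parity

section LB
variable [DecidableEq V] (G : SimpleGraph V) (c k : ℕ)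

lemma tarSeq_reverse {S S' : Finset V} {L : List (Finset V)} (h : TARSeq G c k S S' L) :
    TARSeq G c k S' S L.reverse := by
  obtain ⟨hh, hlast, hch⟩ := h
  refine ⟨?_, ?_, ?_⟩
  · rwa [List.head?_reverse]
  · rwa [List.getLast?_reverse]
  · unfold List.Chain'; rw [List.isChain_reverse]
    exact hch.imp (fun a b hab => tarStep_symm G c k hab)

lemma lb_of_locked_left {S S' : Finset V} (hlk : LockedIn G c k (S ∪ S') S)
    (hne : S ≠ S') {L : List (Finset V)} (hseq : TARSeq G c k S S' L) :
    (symmDiff S S').card + 3 ≤ L.length := by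
  obtain ⟨hh, hlast, hch⟩ := hseq
  obtain ⟨m, hm⟩ := tar_parity G c k L S S' hch hh hlast
  set d := (symmDiff S S').card with hd
  have hdpos : 1 ≤ d := by
    rcases Nat.eq_zero_or_pos d with h0 | h1
    · exact absurd (symmDiff_card_eq_zero h0) hne
    · exact h1
  rcases Nat.eq_zero_or_pos m with rfl | hm1
  · exfalso
    -- tight sequence: length = d + 1 ≥ 2
    cases L with
    | nil => simp at hh
    | cons X₀ t =>
      have hX : X₀ = S := by simpa using hh
      rw [hX] at hch hlast
      cases t with
      | nil =>
        have : S = S' := by simpa using hlast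
        exact hne this
      | cons X₂ t₂ =>
        have hch' : (X₂ :: t₂).Chain' (TARStep G c k) := hch.tail
        have hstep : TARStep G c k S X₂ := (List.isChain_cons_cons.mp hch).1
        have hlast' : (X₂ :: t₂).getLast? = some S' := by
          rwa [List.getLast?_cons_cons] at hlast
        obtain ⟨m', hm'⟩ := tar_parity G c k (X₂ :: t₂) X₂ S' hch' rfl hlast'
        have hlen : (X₂ :: t₂).length = d := by
          simp only [List.length_cons] at hm ⊢
          omega
        have htail_le : (symmDiff X₂ S').card ≤ d - 1 := by omega
        obtain ⟨u, hu⟩ := Finset.card_eq_one.mp hstep.2.2.2.2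
        have hX₂S' : symmDiff X₂ S' = symmDiff {u} (symmDiff S S') := by
          rw [symmDiff_trans_eq X₂ S S', symmDiff_comm X₂ S, hu]
        by_cases huS : u ∈ S
        · -- removal step: card drops below k
          have hX₂ : X₂ = S.erase u := by
            have : symmDiff X₂ S = {u} := by rw [symmDiff_comm]; exact hu
            have h2 : symmDiff {u} S = S.erase u := symmDiff_singleton_mem huS
            calc X₂ = symmDiff S (symmDiff S X₂) := by
                  rw [symmDiff_symmDiff_cancel_left]
              _ = symmDiff {u} S := by rw [hu, symmDiff_comm]
              _ = S.erase u := h2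
          have hcard : X₂.card = S.card - 1 := by
            rw [hX₂, Finset.card_erase_of_mem huS]
          have hk2 : k ≤ X₂.card := hstep.2.2.2.1
          have hSk : S.card = k := hlk.1
          have hSpos : 1 ≤ S.card := Finset.card_pos.mpr ⟨u, huS⟩
          omega
        · have hX₂ : X₂ = insert u S := by
            calc X₂ = symmDiff S (symmDiff S X₂) := by
                  rw [symmDiff_symmDiff_cancel_left]
              _ = symmDiff {u} S := by rw [hu, symmDiff_comm]
              _ = insert u S := symmDiff_singleton_not_mem huS
          by_cases huS' : u ∈ S'
          · -- addition inside S ∪ S' contradicts lockedness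
            have hsub : X₂ ⊆ S ∪ S' := by
              rw [hX₂]
              intro x hx
              rcases Finset.mem_insert.mp hx with rfl | hx
              · exact Finset.mem_union_right _ huS'
              · exact Finset.mem_union_left _ hx
            have : X₂ = S := hlk.2.2.2 X₂ hsub hstep.2.1 (hX₂ ▸ Finset.subset_insert u S)
            rw [hX₂] at this
            exact huS (this ▸ Finset.mem_insert_self u S)
          · -- u outside S ∪ S': symmetric difference grows
            have hnm : u ∉ symmDiff S S' := by
              simp [Finset.mem_symmDiff, huS, huS']
            have : (symmDiff X₂ S').card = d + 1 := by
              rw [hX₂S', symmDiff_singleton_not_mem hnm, Finset.card_insert_of_notMem hnm]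
            omega
  · omega

end LB

section SymmOps
variable [DecidableEq V]

lemma symmDiff_insert_not_mem {A : Finset V} {w : V} (h : w ∉ A) :
    symmDiff A (insert w A) = {w} := by
  ext x
  simp only [Finset.mem_symmDiff, Finset.mem_insert, Finset.mem_singleton]
  constructor
  · rintro (⟨hx, hn⟩ | ⟨(rfl | hx), hn⟩) <;> tauto
  · rintro rfl; tauto

lemma symmDiff_erase_mem {A : Finset V} {a : V} (h : a ∈ A) :
    symmDiff A (A.erase a) = {a} := by
  ext x
  simp only [Finset.mem_symmDiff, Finset.mem_erase, Finset.mem_singleton]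
  constructor
  · rintro (⟨hx, hn⟩ | ⟨⟨hne, hx⟩, hn⟩)
    · by_contra hne; exact hn ⟨fun he => hne (he ▸ rfl), hx⟩
    · tauto
  · rintro rfl; exact Or.inl ⟨h, fun hc => hc.1 rfl⟩

lemma symmDiff_insert_absorb {A B : Finset V} {w : V} (hwB : w ∈ B) (hwA : w ∉ A) :
    symmDiff (insert w A) B = (symmDiff A B).erase w := by
  ext x
  simp only [Finset.mem_symmDiff, Finset.mem_insert, Finset.mem_erase]
  constructor
  · rintro (⟨(rfl | hx), hn⟩ | ⟨hx, hn⟩)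
    · exact absurd hwB hn
    · exact ⟨fun he => hn (he ▸ hwB), Or.inl ⟨hx, hn⟩⟩
    · push_neg at hn
      exact ⟨hn.1, Or.inr ⟨hx, hn.2⟩⟩
  · rintro ⟨hne, (⟨hx, hn⟩ | ⟨hx, hn⟩)⟩
    · exact Or.inl ⟨Or.inr hx, hn⟩
    · exact Or.inr ⟨hx, fun hc => by rcases hc with rfl | hc; exact hne rfl; exact hn hc⟩

lemma symmDiff_erase_absorb {A B : Finset V} {a : V} (haA : a ∈ A) (haB : a ∉ B) :
    symmDiff (A.erase a) B = (symmDiff A B).erase a := by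
  ext x
  simp only [Finset.mem_symmDiff, Finset.mem_erase]
  constructor
  · rintro (⟨⟨hne, hx⟩, hn⟩ | ⟨hx, hn⟩)
    · exact ⟨hne, Or.inl ⟨hx, hn⟩⟩
    · refine ⟨fun he => haB (he ▸ hx), Or.inr ⟨hx, fun hc => hn ?_⟩⟩
      exact ⟨fun he => haB (he ▸ hx), hc⟩
  · rintro ⟨hne, (⟨hx, hn⟩ | ⟨hx, hn⟩)⟩
    · exact Or.inl ⟨⟨hne, hx⟩, hn⟩
    · exact Or.inr ⟨hx, fun hc => hn hc.2⟩

end SymmOps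

section Geometry
variable [DecidableEq V] (l r : V → ℝ) (c : ℕ)

/-- move a covered point to the left-most endpoint of its covering set -/
lemma push_left (X : Finset V) (q : ℝ) (hne : X.Nonempty)
    (hcov : ∀ v ∈ X, l v ≤ q ∧ q ≤ r v) :
    ∃ q' ∈ X.image l, q' ≤ q ∧ ∀ v ∈ X, l v ≤ q' ∧ q' ≤ r v := by
  have hne' : (X.image l).Nonempty := hne.image l
  set q' := (X.image l).max' hne' with hq'
  obtain ⟨v₀, hv₀X, hv₀⟩ := Finset.mem_image.mp ((X.image l).max'_mem hne')
  have hq'q : q' ≤ q := by rw [hq', ← hv₀]; exact (hcov v₀ hv₀X).1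
  refine ⟨q', (X.image l).max'_mem hne', hq'q, fun v hv => ?_⟩
  exact ⟨Finset.le_max' _ _ (Finset.mem_image_of_mem l hv),
    le_trans hq'q (hcov v hv).2⟩

/-- from non-colorability of `insert z A` extract a deep test point -/
lemma exists_deep {A : Finset V} {z : V} (hA : CovOK l r c A) (hzA : z ∉ A)
    (hnc : ¬ CovOK l r c (insert z A)) :
    ∃ p ∈ (insert z A).image l, (l z ≤ p ∧ p ≤ r z) ∧
      c ≤ (A.filter (fun v => l v ≤ p ∧ p ≤ r v)).card := by
  classical
  rw [CovOK] at hnc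
  push_neg at hnc
  obtain ⟨q, hq⟩ := hnc
  set F := (insert z A).filter (fun v => l v ≤ q ∧ q ≤ r v) with hF
  have hFcard : c + 1 ≤ F.card := hq
  have hFne : F.Nonempty := Finset.card_pos.mp (by omega)
  obtain ⟨q', hq'mem, hq'le, hq'cov⟩ := push_left l r F q hFne
    (fun v hv => (Finset.mem_filter.mp hv).2)
  have hzF : z ∈ F := by
    by_contra hzF
    have hsub : F ⊆ A.filter (fun v => l v ≤ q ∧ q ≤ r v) := by
      intro x hx
      have hx' := Finset.mem_filter.mp hx
      rcases Finset.mem_insert.mp hx'.1 with rfl | hxA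
      · exact absurd hx hzF
      · exact Finset.mem_filter.mpr ⟨hxA, hx'.2⟩
    have := le_trans (Finset.card_le_card hsub) (hA q)
    omega
  have hzq' := hq'cov z hzF
  have hsub2 : F.erase z ⊆ A.filter (fun v => l v ≤ q' ∧ q' ≤ r v) := by
    intro x hx
    obtain ⟨hxz, hxF⟩ := Finset.mem_erase.mp hx
    have hx' := Finset.mem_filter.mp hxF
    rcases Finset.mem_insert.mp hx'.1 with rfl | hxA
    · exact absurd rfl hxz
    · exact Finset.mem_filter.mpr ⟨hxA, hq'cov x hxF⟩
  have hcard2 : c ≤ (A.filter (fun v => l v ≤ q' ∧ q' ≤ r v)).card := by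
    have h1 := Finset.card_le_card hsub2
    rw [Finset.card_erase_of_mem hzF] at h1
    omega
  refine ⟨q', ?_, hzq', hcard2⟩
  obtain ⟨v₀, hv₀F, hv₀⟩ := Finset.mem_image.mp hq'mem
  exact Finset.mem_image.mpr ⟨v₀, (Finset.mem_filter.mp hv₀F).1, hv₀⟩

/-- the key geometric swap: remove a suitable `a` so that `z` fits -/
lemma swap_ok (hlr : ∀ v, l v ≤ r v) {A B : Finset V} {z : V}
    (hA : CovOK l r c A) (hB : CovOK l r c B)
    (hzB : z ∈ B) (hzA : z ∉ A) (hnc : ¬ CovOK l r c (insert z A))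
    (hmin : ∀ y ∈ symmDiff A B, r z ≤ r y) :
    ∃ a ∈ A, a ∉ B ∧ CovOK l r c (insert z (A.erase a)) := by
  classical
  have hc1 : 1 ≤ c := by
    have h0 : z ∈ B.filter (fun v => l v ≤ l z ∧ l z ≤ r v) :=
      Finset.mem_filter.mpr ⟨hzB, le_refl _, hlr z⟩
    exact le_trans (Finset.card_pos.mpr ⟨z, h0⟩) (hB (l z))
  set P := (A ∪ B).image l with hP
  set D := P.filter (fun p => (l z ≤ p ∧ p ≤ r z) ∧
    c ≤ (A.filter (fun v => l v ≤ p ∧ p ≤ r v)).card) with hD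
  have hDne : D.Nonempty := by
    obtain ⟨p, hpmem, hpz, hpc⟩ := exists_deep l r c hA hzA hnc
    refine ⟨p, Finset.mem_filter.mpr ⟨?_, hpz, hpc⟩⟩
    obtain ⟨v₀, hv₀, hv₀e⟩ := Finset.mem_image.mp hpmem
    refine Finset.mem_image.mpr ⟨v₀, ?_, hv₀e⟩
    rcases Finset.mem_insert.mp hv₀ with rfl | hv
    · exact Finset.mem_union_right _ hzB
    · exact Finset.mem_union_left _ hv
  obtain ⟨p, hpD, hpmin⟩ : ∃ p ∈ D, ∀ y ∈ D, p ≤ y :=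
    ⟨D.min' hDne, D.min'_mem hDne, fun y hy => D.min'_le y hy⟩
  obtain ⟨hpP, hpz, hpc⟩ := Finset.mem_filter.mp hpD
  -- find a ∈ A \ B covering p
  have hcount : ∃ a ∈ A.filter (fun v => l v ≤ p ∧ p ≤ r v), a ∉ B := by
    by_contra hc
    push_neg at hc
    have hsub : A.filter (fun v => l v ≤ p ∧ p ≤ r v) ⊆
        (B.filter (fun v => l v ≤ p ∧ p ≤ r v)).erase z := by
      intro x hx
      have hx' := Finset.mem_filter.mp hx
      refine Finset.mem_erase.mpr ⟨fun he => hzA (he ▸ hx'.1), Finset.mem_filter.mpr ⟨hc x hx, hx'.2⟩⟩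
    have h1 := Finset.card_le_card hsub
    have h2 : z ∈ B.filter (fun v => l v ≤ p ∧ p ≤ r v) :=
      Finset.mem_filter.mpr ⟨hzB, hpz⟩
    rw [Finset.card_erase_of_mem h2] at h1
    have h3 := hB p
    omega
  obtain ⟨a, haF, haB⟩ := hcount
  obtain ⟨haA, hap⟩ := Finset.mem_filter.mp haF
  have hra : r z ≤ r a := hmin a (Finset.mem_symmDiff.mpr (Or.inl ⟨haA, haB⟩))
  refine ⟨a, haA, haB, ?_⟩
  -- show coverage of the swapped set
  intro q
  by_contra hq
  push_neg at hq
  set F := ((insert z (A.erase a)).filter (fun v => l v ≤ q ∧ q ≤ r v)) with hF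
  have hFcard : c + 1 ≤ F.card := hq
  have hzF : z ∈ F := by
    by_contra hzF
    have hsub : F ⊆ A.filter (fun v => l v ≤ q ∧ q ≤ r v) := by
      intro x hx
      have hx' := Finset.mem_filter.mp hx
      rcases Finset.mem_insert.mp hx'.1 with rfl | hxA
      · exact absurd hx hzF
      · exact Finset.mem_filter.mpr ⟨Finset.mem_of_mem_erase hxA, hx'.2⟩
    have := le_trans (Finset.card_le_card hsub) (hA q)
    omega
  have hzq : l z ≤ q ∧ q ≤ r z := (Finset.mem_filter.mp hzF).2
  set Gq := A.filter (fun v => l v ≤ q ∧ q ≤ r v) with hGq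
  have hGsub : F.erase z ⊆ Gq := by
    intro x hx
    obtain ⟨hxz, hxF⟩ := Finset.mem_erase.mp hx
    have hx' := Finset.mem_filter.mp hxF
    rcases Finset.mem_insert.mp hx'.1 with rfl | hxA
    · exact absurd rfl hxz
    · exact Finset.mem_filter.mpr ⟨Finset.mem_of_mem_erase hxA, hx'.2⟩
  have hGc : c ≤ Gq.card := by
    have h1 := Finset.card_le_card hGsub
    rw [Finset.card_erase_of_mem hzF] at h1
    omega
  -- a does not cover q
  have haq : a ∉ Gq := by
    intro haGq
    have hsub : F ⊆ insert z (Gq.erase a) := by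
      intro x hx
      have hx' := Finset.mem_filter.mp hx
      rcases Finset.mem_insert.mp hx'.1 with rfl | hxA
      · exact Finset.mem_insert_self _ _
      · obtain ⟨hxa, hxA'⟩ := Finset.mem_erase.mp hxA
        exact Finset.mem_insert_of_mem (Finset.mem_erase.mpr ⟨hxa, Finset.mem_filter.mpr ⟨hxA', hx'.2⟩⟩)
    have h1 := Finset.card_le_card hsub
    have h2 := Finset.card_insert_le z (Gq.erase a)
    rw [Finset.card_erase_of_mem haGq] at h2
    have h3 := hA q
    rw [← hGq] at h3
    omega
  -- push left the deep set at q to land in D, contradicting minimality / covering a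
  have hGzne : (insert z Gq).Nonempty := Finset.insert_nonempty _ _
  have hGzcov : ∀ v ∈ insert z Gq, l v ≤ q ∧ q ≤ r v := by
    intro v hv
    rcases Finset.mem_insert.mp hv with rfl | hv
    · exact hzq
    · exact (Finset.mem_filter.mp hv).2
  obtain ⟨q', hq'mem, hq'le, hq'cov⟩ := push_left l r (insert z Gq) q hGzne hGzcov
  have hq'D : q' ∈ D := by
    refine Finset.mem_filter.mpr ⟨?_, hq'cov z (Finset.mem_insert_self _ _), ?_⟩
    · obtain ⟨v₀, hv₀, hv₀e⟩ := Finset.mem_image.mp hq'mem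
      refine Finset.mem_image.mpr ⟨v₀, ?_, hv₀e⟩
      rcases Finset.mem_insert.mp hv₀ with rfl | hv
      · exact Finset.mem_union_right _ hzB
      · exact Finset.mem_union_left _ (Finset.mem_filter.mp hv).1
    · have : Gq ⊆ A.filter (fun v => l v ≤ q' ∧ q' ≤ r v) := by
        intro x hx
        exact Finset.mem_filter.mpr ⟨(Finset.mem_filter.mp hx).1,
          hq'cov x (Finset.mem_insert_of_mem hx)⟩
      exact le_trans hGc (Finset.card_le_card this)
  have hpq' : p ≤ q' := hpmin q' hq'D
  -- now a covers q, contradiction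
  apply haq
  refine Finset.mem_filter.mpr ⟨haA, le_trans hap.1 (le_trans hpq' hq'le), le_trans hzq.2 hra⟩

end Geometry

section Key
variable [DecidableEq V]

theorem keyLemma (G : SimpleGraph V) (c k : ℕ) (l r : V → ℝ)
    (hlr : ∀ v, l v ≤ r v)
    (hadj : ∀ u v, G.Adj u v ↔ u ≠ v ∧ max (l u) (l v) ≤ min (r u) (r v)) :
    ∀ (d : ℕ) (A B : Finset V), (symmDiff A B).card = d →
    CovOK l r c A → CovOK l r c B → k ≤ A.card → k ≤ B.card →
    (k < A.card ∨ ∃ w ∈ B \ A, CovOK l r c (insert w A)) →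
    (k < B.card ∨ ∃ a ∈ A \ B, CovOK l r c (insert a B)) →
    ∃ L, TARSeq G c k A B L ∧ L.length = d + 1 := by
  have col : ∀ X : Finset V, CovOK l r c X → ColSet G c X :=
    fun X h => colSet_of_covOK l r c G hlr hadj h
  intro d
  induction d using Nat.strong_induction_on with
  | _ d IH =>
  intro A B hd hA hB hkA hkB hHA hHB
  by_cases hABeq : A = B
  · subst hABeq
    have hd0 : d = 0 := by
      rw [symmDiff_self] at hd
      simpa using hd.symm
    refine ⟨[A], ⟨rfl, rfl, List.isChain_singleton A⟩, by simp [hd0]⟩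
  have hdpos : 1 ≤ d := by
    rcases Nat.eq_zero_or_pos d with h0 | h1
    · exact absurd (symmDiff_card_eq_zero (h0 ▸ hd)) hABeq
    · exact h1
  by_cases hadd : ∃ w ∈ B \ A, CovOK l r c (insert w A)
  · -- add a vertex of B \ A to A
    obtain ⟨w, hwBA, hwcov⟩ := hadd
    obtain ⟨hwB, hwA⟩ := Finset.mem_sdiff.mp hwBA
    have hwS : w ∈ symmDiff A B := Finset.mem_symmDiff.mpr (Or.inr ⟨hwB, hwA⟩)
    have hd1 : (symmDiff (insert w A) B).card = d - 1 := by
      rw [symmDiff_insert_absorb hwB hwA, Finset.card_erase_of_mem hwS, hd]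
    have hcard1 : (insert w A).card = A.card + 1 := Finset.card_insert_of_notMem hwA
    obtain ⟨L₁, hseq₁, hlen₁⟩ := IH (d-1) (by omega) (insert w A) B hd1 hwcov hB
      (by omega) hkB (Or.inl (by omega))
      (by
        rcases hHB with h | ⟨a, haAB, hacov⟩
        · exact Or.inl h
        · obtain ⟨haA, haB⟩ := Finset.mem_sdiff.mp haAB
          exact Or.inr ⟨a, Finset.mem_sdiff.mpr ⟨Finset.mem_insert_of_mem haA, haB⟩, hacov⟩)
    obtain ⟨hh₁, hl₁, hch₁⟩ := hseq₁
    refine ⟨A :: L₁, ⟨rfl, ?_, ?_⟩, ?_⟩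
    · cases L₁ with
      | nil => simp at hh₁
      | cons x t => rw [List.getLast?_cons_cons]; exact hl₁
    · unfold List.Chain'; rw [List.isChain_cons]
      refine ⟨?_, hch₁⟩
      intro y hy
      rw [hh₁] at hy
      obtain rfl : y = insert w A := (by simpa using hy : insert w A = y).symm
      exact ⟨col A hA, col _ hwcov, hkA, by omega, by
        rw [symmDiff_insert_not_mem hwA]; simp⟩
    · simp only [List.length_cons, hlen₁]
      omega
  by_cases hadd' : ∃ a ∈ A \ B, CovOK l r c (insert a B)
  · -- add a vertex of A \ B to B, working from the B side
    obtain ⟨a, haAB, hacov⟩ := hadd'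
    obtain ⟨haA, haB⟩ := Finset.mem_sdiff.mp haAB
    have haS : a ∈ symmDiff A B := Finset.mem_symmDiff.mpr (Or.inl ⟨haA, haB⟩)
    have hd1 : (symmDiff A (insert a B)).card = d - 1 := by
      rw [symmDiff_comm, symmDiff_insert_absorb haA haB, symmDiff_comm,
        Finset.card_erase_of_mem haS, hd]
    have hcard1 : (insert a B).card = B.card + 1 := Finset.card_insert_of_notMem haB
    obtain ⟨L₁, hseq₁, hlen₁⟩ := IH (d-1) (by omega) A (insert a B) hd1 hA hacov
      hkA (by omega)
      (by
        rcases hHA with h | ⟨w, hwBA, hwcov⟩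
        · exact Or.inl h
        · obtain ⟨hwB, hwA⟩ := Finset.mem_sdiff.mp hwBA
          exact Or.inr ⟨w, Finset.mem_sdiff.mpr ⟨Finset.mem_insert_of_mem hwB, hwA⟩, hwcov⟩)
      (Or.inl (by omega))
    obtain ⟨hh₁, hl₁, hch₁⟩ := hseq₁
    refine ⟨L₁ ++ [B], ⟨?_, ?_, ?_⟩, ?_⟩
    · cases L₁ with
      | nil => simp at hh₁
      | cons x t => simpa using hh₁
    · simp
    · unfold List.Chain'; rw [List.isChain_append]
      refine ⟨hch₁, List.isChain_singleton B, ?_⟩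
      intro x hx y hy
      rw [hl₁] at hx
      have hx' : x = insert a B := (by simpa using hx : insert a B = x).symm
      have hy' : y = B := (by simpa using hy : B = y).symm
      subst hx' hy'
      exact ⟨col _ hacov, col _ hB, by omega, hkB, by
        rw [symmDiff_comm, symmDiff_insert_not_mem haB]; simp⟩
    · simp only [List.length_append, List.length_singleton, hlen₁]
      omega
  -- both sides maximal: cards exceed k, use the geometric swap
  push_neg at hadd hadd'
  have hkA' : k < A.card := by
    rcases hHA with h | ⟨w, hw, hcov⟩
    · exact h
    · exact absurd hcov (hadd w hw)
  have hkB' : k < B.card := by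
    rcases hHB with h | ⟨a, ha, hcov⟩
    · exact h
    · exact absurd hcov (hadd' a ha)
  have hSne : (symmDiff A B).Nonempty := Finset.card_pos.mp (by omega)
  obtain ⟨z, hzS, hzmin⟩ := Finset.exists_min_image (symmDiff A B) r hSne
  rcases Finset.mem_symmDiff.mp hzS with ⟨hzA, hzB⟩ | ⟨hzB, hzA⟩
  · -- z ∈ A \ B : swap on the B side
    have hnc : ¬ CovOK l r c (insert z B) :=
      hadd' z (Finset.mem_sdiff.mpr ⟨hzA, hzB⟩)
    obtain ⟨w, hwB, hwA, hwcov⟩ := swap_ok l r c hlr hB hA hzA hzB hnc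
      (by intro y hy; exact hzmin y (by rwa [symmDiff_comm] at hy))
    set B' := insert z (B.erase w) with hB'
    have hzBw : z ∉ B.erase w := fun h => hzB (Finset.mem_of_mem_erase h)
    have hcardB' : B'.card = B.card := by
      rw [hB', Finset.card_insert_of_notMem hzBw, Finset.card_erase_of_mem hwB]
      have : 1 ≤ B.card := Finset.card_pos.mpr ⟨w, hwB⟩
      omega
    have hwS : w ∈ symmDiff A B := Finset.mem_symmDiff.mpr (Or.inr ⟨hwB, hwA⟩)
    have hd2 : (symmDiff A B').card = d - 2 := by
      have h1 : symmDiff B' A = ((symmDiff B A).erase w).erase z := by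
        rw [hB', symmDiff_insert_absorb hzA hzBw,
          symmDiff_erase_absorb hwB hwA]
      have hzw : z ≠ w := fun he => hzB (he ▸ hwB)
      have hzS' : z ∈ (symmDiff B A).erase w :=
        Finset.mem_erase.mpr ⟨hzw, by rwa [symmDiff_comm]⟩
      rw [symmDiff_comm, h1, Finset.card_erase_of_mem hzS',
        Finset.card_erase_of_mem (by rwa [symmDiff_comm] at hwS), symmDiff_comm, hd]
      omega
    have hd2' : 2 ≤ d := by
      have h1 : (symmDiff A B').card = d - 2 := hd2
      have hzw : z ≠ w := fun he => hzB (he ▸ hwB)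
      have : z ∈ (symmDiff A B).erase w := Finset.mem_erase.mpr ⟨hzw, hzS⟩
      have h2 := Finset.card_pos.mpr ⟨z, this⟩
      rw [Finset.card_erase_of_mem hwS, hd] at h2
      omega
    obtain ⟨L₁, hseq₁, hlen₁⟩ := IH (d-2) (by omega) A B' hd2 hA hwcov hkA
      (by omega) (Or.inl hkA') (Or.inl (by omega))
    obtain ⟨hh₁, hl₁, hch₁⟩ := hseq₁
    refine ⟨L₁ ++ [B.erase w, B], ⟨?_, ?_, ?_⟩, ?_⟩
    · cases L₁ with
      | nil => simp at hh₁
      | cons x t => simpa using hh₁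
    · rw [show L₁ ++ [B.erase w, B] = (L₁ ++ [B.erase w]) ++ [B] by simp]
      simp
    · unfold List.Chain'; rw [List.isChain_append]
      refine ⟨hch₁, ?_, ?_⟩
      · rw [List.isChain_cons_cons]
        refine ⟨?_, List.isChain_singleton B⟩
        exact ⟨col _ (covOK_mono l r c (Finset.erase_subset _ _) hB), col B hB,
          by rw [Finset.card_erase_of_mem hwB]; omega, hkB, by
            rw [symmDiff_comm, symmDiff_erase_mem hwB]; simp⟩
      · intro x hx y hy
        rw [hl₁] at hx
        obtain rfl : x = B' := (by simpa using hx : B' = x).symm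
        obtain rfl : y = B.erase w := (by simpa using hy : B.erase w = y).symm
        exact ⟨col _ hwcov, col _ (covOK_mono l r c (Finset.erase_subset _ _) hB),
          by omega, by rw [Finset.card_erase_of_mem hwB]; omega, by
            rw [hB', symmDiff_comm, symmDiff_insert_not_mem hzBw]; simp⟩
    · simp only [List.length_append, List.length_cons, List.length_nil, hlen₁]
      omega
  · -- z ∈ B \ A : swap on the A side
    have hnc : ¬ CovOK l r c (insert z A) :=
      hadd z (Finset.mem_sdiff.mpr ⟨hzB, hzA⟩)
    obtain ⟨a, haA, haB, hacov⟩ := swap_ok l r c hlr hA hB hzB hzA hnc hzmin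
    set A' := insert z (A.erase a) with hA'
    have hzAa : z ∉ A.erase a := fun h => hzA (Finset.mem_of_mem_erase h)
    have hcardA' : A'.card = A.card := by
      rw [hA', Finset.card_insert_of_notMem hzAa, Finset.card_erase_of_mem haA]
      have : 1 ≤ A.card := Finset.card_pos.mpr ⟨a, haA⟩
      omega
    have haS : a ∈ symmDiff A B := Finset.mem_symmDiff.mpr (Or.inl ⟨haA, haB⟩)
    have hd2 : (symmDiff A' B).card = d - 2 := by
      have h1 : symmDiff A' B = ((symmDiff A B).erase a).erase z := by
        rw [hA', symmDiff_insert_absorb hzB hzAa, symmDiff_erase_absorb haA haB]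
      have hzw : z ≠ a := fun he => hzA (he ▸ haA)
      have hzS' : z ∈ (symmDiff A B).erase a := Finset.mem_erase.mpr ⟨hzw, hzS⟩
      rw [h1, Finset.card_erase_of_mem hzS', Finset.card_erase_of_mem haS, hd]
      omega
    have hd2' : 2 ≤ d := by
      have hzw : z ≠ a := fun he => hzA (he ▸ haA)
      have : z ∈ (symmDiff A B).erase a := Finset.mem_erase.mpr ⟨hzw, hzS⟩
      have h2 := Finset.card_pos.mpr ⟨z, this⟩
      rw [Finset.card_erase_of_mem haS, hd] at h2
      omega
    obtain ⟨L₁, hseq₁, hlen₁⟩ := IH (d-2) (by omega) A' B hd2 hacov hB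
      (by omega) hkB (Or.inl (by omega)) (Or.inl hkB')
    obtain ⟨hh₁, hl₁, hch₁⟩ := hseq₁
    refine ⟨A :: A.erase a :: L₁, ⟨rfl, ?_, ?_⟩, ?_⟩
    · cases L₁ with
      | nil => simp at hh₁
      | cons x t => rw [List.getLast?_cons_cons, List.getLast?_cons_cons]; exact hl₁
    · unfold List.Chain'; rw [List.isChain_cons]
      constructor
      · intro y hy
        obtain rfl : y = A.erase a := (by simpa using hy : A.erase a = y).symm
        exact ⟨col A hA, col _ (covOK_mono l r c (Finset.erase_subset _ _) hA),
          hkA, by rw [Finset.card_erase_of_mem haA]; omega, by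
            rw [symmDiff_erase_mem haA]; simp⟩
      · rw [List.isChain_cons]
        refine ⟨?_, hch₁⟩
        intro y hy
        rw [hh₁] at hy
        obtain rfl : y = A' := (by simpa using hy : A' = y).symm
        exact ⟨col _ (covOK_mono l r c (Finset.erase_subset _ _) hA), col _ hacov,
          by rw [Finset.card_erase_of_mem haA]; omega, by omega, by
            rw [hA', symmDiff_insert_not_mem hzAa]; simp⟩
    · simp only [List.length_cons, hlen₁]
      omega

end Key

section Assemble
variable [DecidableEq V]

lemma symmDiff_insert_outside {A B : Finset V} {v : V} (hvA : v ∉ A) (hvB : v ∉ B) :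
    symmDiff (insert v A) B = insert v (symmDiff A B) := by
  ext x
  simp only [Finset.mem_symmDiff, Finset.mem_insert]
  constructor
  · rintro (⟨(rfl | hx), hn⟩ | ⟨hx, hn⟩)
    · exact Or.inl rfl
    · exact Or.inr (Or.inl ⟨hx, hn⟩)
    · push_neg at hn
      exact Or.inr (Or.inr ⟨hx, hn.2⟩)
  · rintro (rfl | (⟨hx, hn⟩ | ⟨hx, hn⟩))
    · exact Or.inl ⟨Or.inl rfl, hvB⟩
    · exact Or.inl ⟨Or.inr hx, hn⟩
    · refine Or.inr ⟨hx, ?_⟩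
      rintro (rfl | hc)
      · exact hvB hx
      · exact hn hc

lemma ub_locked [Fintype V] (G : SimpleGraph V) (c k : ℕ) (l r : V → ℝ)
    (hlr : ∀ v, l v ≤ r v)
    (hadj : ∀ u v, G.Adj u v ↔ u ≠ v ∧ max (l u) (l v) ≤ min (r u) (r v))
    {S S' : Finset V} (hne : S ≠ S') (hS : ColSet G c S) (hS' : ColSet G c S')
    (hk : k ≤ S.card) (hk' : k ≤ S'.card)
    (hnlG : ¬ Locked G c k S)
    (hlk : LockedIn G c k (S ∪ S') S) (hnlk' : ¬ LockedIn G c k (S ∪ S') S') :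
    ∃ L, TARSeq G c k S S' L ∧ L.length = (symmDiff S S').card + 3 := by
  classical
  have covS : CovOK l r c S := covOK_of_colSet l r c G hadj hS
  have covS' : CovOK l r c S' := covOK_of_colSet l r c G hadj hS'
  have hSk : S.card = k := hlk.1
  -- get a vertex v outside S ∪ S' that can be added to S
  have hmax : ¬ ∀ T ⊆ (Finset.univ : Finset V), ColSet G c T → S ⊆ T → T = S := by
    intro h
    exact hnlG ⟨hSk, hS, Finset.subset_univ _, h⟩
  push_neg at hmax
  obtain ⟨T, hTuniv, hTcol, hST, hTne⟩ := hmax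
  have hssub : S ⊂ T := by
    rw [Finset.ssubset_def]
    exact ⟨hST, fun h => hTne (Finset.Subset.antisymm h hST)⟩
  obtain ⟨v, hvT, hvS⟩ := Finset.exists_of_ssubset hssub
  have covT : CovOK l r c T := covOK_of_colSet l r c G hadj hTcol
  have covvS : CovOK l r c (insert v S) :=
    covOK_mono l r c (Finset.insert_subset hvT hST) covT
  have hvS' : v ∉ S' := by
    intro hvS'
    have hsub : insert v S ⊆ S ∪ S' := by
      intro x hx
      rcases Finset.mem_insert.mp hx with rfl | hx
      · exact Finset.mem_union_right _ hvS'
      · exact Finset.mem_union_left _ hx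
    have := hlk.2.2.2 (insert v S) hsub (colSet_of_covOK l r c G hlr hadj covvS)
      (Finset.subset_insert _ _)
    exact hvS (this ▸ Finset.mem_insert_self v S)
  -- hypotheses for the key lemma
  have hHB : k < S'.card ∨ ∃ a ∈ (insert v S) \ S', CovOK l r c (insert a S') := by
    rcases Nat.lt_or_ge k S'.card with h | h
    · exact Or.inl h
    · have hS'k : S'.card = k := le_antisymm h hk'
      have hmax' : ¬ ∀ T ⊆ S ∪ S', ColSet G c T → S' ⊆ T → T = S' := by
        intro hmm
        exact hnlk' ⟨hS'k, hS', Finset.subset_union_right, hmm⟩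
      push_neg at hmax'
      obtain ⟨T', hT'sub, hT'col, hS'T', hT'ne⟩ := hmax'
      have hssub' : S' ⊂ T' := by
        rw [Finset.ssubset_def]
        exact ⟨hS'T', fun h2 => hT'ne (Finset.Subset.antisymm h2 hS'T')⟩
      obtain ⟨x, hxT', hxS'⟩ := Finset.exists_of_ssubset hssub'
      have hxS : x ∈ S := by
        rcases Finset.mem_union.mp (hT'sub hxT') with h2 | h2
        · exact h2
        · exact absurd h2 hxS'
      refine Or.inr ⟨x, Finset.mem_sdiff.mpr ⟨Finset.mem_insert_of_mem hxS, hxS'⟩, ?_⟩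
      exact covOK_mono l r c (Finset.insert_subset hxT' hS'T')
        (covOK_of_colSet l r c G hadj hT'col)
  have hdA : (symmDiff (insert v S) S').card = (symmDiff S S').card + 1 := by
    rw [symmDiff_insert_outside hvS hvS',
      Finset.card_insert_of_notMem (by simp [Finset.mem_symmDiff, hvS, hvS'])]
  obtain ⟨L₁, hseq₁, hlen₁⟩ := keyLemma G c k l r hlr hadj
    ((symmDiff (insert v S) S').card) (insert v S) S' rfl covvS covS'
    (by rw [Finset.card_insert_of_notMem hvS]; omega) hk'
    (Or.inl (by rw [Finset.card_insert_of_notMem hvS]; omega)) hHB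
  obtain ⟨hh₁, hl₁, hch₁⟩ := hseq₁
  refine ⟨S :: L₁, ⟨rfl, ?_, ?_⟩, ?_⟩
  · cases L₁ with
    | nil => simp at hh₁
    | cons x t => rw [List.getLast?_cons_cons]; exact hl₁
  · unfold List.Chain'; rw [List.isChain_cons]
    refine ⟨?_, hch₁⟩
    intro y hy
    rw [hh₁] at hy
    have hy' : y = insert v S := (by simpa using hy : insert v S = y).symm
    subst hy'
    refine ⟨hS, colSet_of_covOK l r c G hlr hadj covvS, hk,
      by rw [Finset.card_insert_of_notMem hvS]; omega, ?_⟩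
    rw [symmDiff_insert_not_mem hvS]
    simp
  · simp only [List.length_cons, hlen₁, hdA]

end Assemble


theorem interval_dist_one_locked {V : Type*} [Fintype V] [DecidableEq V]
    (G : SimpleGraph V) (hG : IsIntervalGraph G) (c k : ℕ) (S S' : Finset V)
    (hne : S ≠ S') (hS : ColSet G c S) (hS' : ColSet G c S')
    (hk : k ≤ S.card) (hk' : k ≤ S'.card)
    (hnlG : ¬ Locked G c k S) (hnlG' : ¬ Locked G c k S')
    (hone : (LockedIn G c k (S ∪ S') S ∧ ¬ LockedIn G c k (S ∪ S') S') ∨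
            (¬ LockedIn G c k (S ∪ S') S ∧ LockedIn G c k (S ∪ S') S')) :
    TARDist G c k S S' = ((symmDiff S S').card : ℕ∞) + 2 := by
  classical
  obtain ⟨l, r, hlr, hadj⟩ := hG
  set d := (symmDiff S S').card with hdd
  have hub : ∃ L, TARSeq G c k S S' L ∧ L.length = d + 3 := by
    rcases hone with ⟨h1, h2⟩ | ⟨h1, h2⟩
    · exact ub_locked G c k l r hlr hadj hne hS hS' hk hk' hnlG h1 h2
    · obtain ⟨L, hseq, hlen⟩ := ub_locked G c k l r hlr hadj (Ne.symm hne) hS' hS hk' hk hnlG'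
        (by rwa [Finset.union_comm] at h2) (by rwa [Finset.union_comm] at h1)
      refine ⟨L.reverse, tarSeq_reverse G c k hseq, ?_⟩
      rw [List.length_reverse, hlen, hdd, symmDiff_comm]
  have hlb : ∀ L, TARSeq G c k S S' L → d + 3 ≤ L.length := by
    intro L hseq
    rcases hone with ⟨h1, _⟩ | ⟨_, h1⟩
    · exact lb_of_locked_left G c k h1 hne hseq
    · have := lb_of_locked_left G c k (by rwa [Finset.union_comm] at h1) (Ne.symm hne)
        (tarSeq_reverse G c k hseq)
      rwa [List.length_reverse, symmDiff_comm] at this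
  apply le_antisymm
  · apply sInf_le
    obtain ⟨L, hseq, hlen⟩ := hub
    refine ⟨L, hseq, ?_⟩
    rw [hlen]
    push_cast
    ring
  · apply le_sInf
    rintro n ⟨L, hseq, hlen⟩
    have hLB := hlb L hseq
    induction n using ENat.recTopCoe with
    | top => exact le_top
    | coe m =>
      have hlen' : L.length = m + 1 := by
        have : ((L.length : ℕ) : ℕ∞) = ((m + 1 : ℕ) : ℕ∞) := by
          rw [hlen]; push_cast; ring
        exact_mod_cast this
      have hdm : d + 2 ≤ m := by omega
      calc ((d : ℕ∞) + 2) = ((d + 2 : ℕ) : ℕ∞) := by push_cast; ring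
        _ ≤ (m : ℕ∞) := Nat.cast_le.mpr hdm
end

section
/- Let G = (K, I; E) be a split graph and let S be a c-colorable set with |S| ≥ k. Then S ⊆ T_{S ∩ K}, where T_C = C ∪ I if |C| < c and T_C = C ∪ (I \ {u ∈ I : C ⊆ N(u)}) if |C| = c; consequently S is reachable from T_{S ∩ K} under TAR(k) by adding vertices one by one. -/
open Finset

variable {V : Type*}

/-- For a split graph with independent part `I`, the canonical maximal `c`-colorable
set with clique part `C`. -/
def splitTC (G : SimpleGraph V) [DecidableEq V] [DecidableRel G.Adj]
    (c : ℕ) (I C : Finset V) : Finset V :=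
  if C.card < c then C ∪ I
  else C ∪ I.filter (fun u => ¬ ∀ v ∈ C, G.Adj v u)

lemma colSet_mono {V : Type*} {G : SimpleGraph V} {c : ℕ} {A B : Finset V}
    (hAB : A ⊆ B) (hB : ColSet G c B) : ColSet G c A := by
  obtain ⟨f⟩ := hB
  exact ⟨SimpleGraph.Coloring.mk (fun v => f ⟨v.1, hAB v.2⟩)
    (fun {x y} h => f.valid h)⟩

lemma clique_card_le {V : Type*} [DecidableEq V] {G : SimpleGraph V} {c : ℕ}
    {S D : Finset V} (hD : D ⊆ S)
    (hcl : ∀ x ∈ D, ∀ y ∈ D, x ≠ y → G.Adj x y)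
    (hS : ColSet G c S) : D.card ≤ c := by
  obtain ⟨f⟩ := hS
  have hinj : Function.Injective (fun x : D => f ⟨x.1, hD x.2⟩) := by
    intro x y h
    by_contra hne
    have hadj : (SimpleGraph.induce (S : Set V) G).Adj ⟨x.1, hD x.2⟩ ⟨y.1, hD y.2⟩ := by
      simp only [SimpleGraph.induce, SimpleGraph.comap_adj]
      exact hcl x.1 x.2 y.1 y.2 (fun he => hne (Subtype.ext he))
    exact f.valid hadj h
  simpa using Fintype.card_le_of_injective _ hinj

lemma tarReach_of_subset {V : Type*} [DecidableEq V] (G : SimpleGraph V) (c k : ℕ) :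
    ∀ n (S T : Finset V), (T \ S).card = n → S ⊆ T → ColSet G c T → k ≤ S.card →
      TARReach G c k S T := by
  intro n
  induction n with
  | zero =>
    intro S T h hST hT hk
    have hTS : T ⊆ S := Finset.sdiff_eq_empty_iff_subset.mp (Finset.card_eq_zero.mp h)
    have : S = T := Finset.Subset.antisymm hST hTS
    subst this
    exact ⟨[S], by simp [TARSeq, List.Chain']⟩
  | succ n ih =>
    intro S T h hST hT hk
    have hne : (T \ S).Nonempty := by
      rw [← Finset.card_pos, h]; exact Nat.succ_pos n
    obtain ⟨v, hv⟩ := hne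
    have hvT : v ∈ T := (Finset.mem_sdiff.mp hv).1
    have hvS : v ∉ S := (Finset.mem_sdiff.mp hv).2
    set S' := insert v S with hS'
    have hS'T : S' ⊆ T := Finset.insert_subset hvT hST
    have hcard : (T \ S').card = n := by
      have : T \ S' = (T \ S).erase v := by
        ext x
        simp [hS', Finset.mem_sdiff, Finset.mem_erase, and_comm, or_imp, not_or]
        tauto
      rw [this, Finset.card_erase_of_mem hv, h]
      omega
    have hkS' : k ≤ S'.card := le_trans hk (Finset.card_le_card (Finset.subset_insert _ _))
    obtain ⟨l, hl1, hl2, hl3⟩ := ih S' T hcard hS'T hT hkS'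
    refine ⟨S :: l, rfl, ?_, ?_⟩
    · have : l ≠ [] := by
        intro hnil; rw [hnil] at hl1; simp at hl1
      rw [List.getLast?_cons, ← hl2]
      cases l with
      | nil => exact absurd rfl this
      | cons a as => simp [List.getLast?_cons]
    · rw [List.Chain', List.isChain_cons]
      refine ⟨?_, hl3⟩
      intro b hb
      rw [hl1] at hb
      obtain rfl : S' = b := by simpa using hb
      refine ⟨colSet_mono hST hT, colSet_mono hS'T hT, hk, hkS', ?_⟩
      have : symmDiff S S' = {v} := by
        rw [symmDiff_def]
        simp only [Finset.sup_eq_union]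
        rw [hS']
        rw [Finset.sdiff_insert_of_notMem hvS, Finset.sdiff_self,
          Finset.insert_sdiff_of_notMem _ hvS, Finset.sdiff_self]
        simp
      rw [this, Finset.card_singleton]

theorem subset_splitTC_and_reachable {V : Type*} [DecidableEq V] (G : SimpleGraph V)
    [DecidableRel G.Adj] (K I : Finset V)
    (hclique : G.IsClique K) (hindep : ∀ u ∈ I, ∀ v ∈ I, ¬ G.Adj u v)
    (hdisj : Disjoint K I) (hcover : ∀ v : V, v ∈ K ∨ v ∈ I) (c k : ℕ)
    (S : Finset V) (hS : ColSet G c S) (hk : k ≤ S.card) :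
    S ⊆ splitTC G c I (S ∩ K) ∧ TARReach G c k S (splitTC G c I (S ∩ K)) := by
  classical
  set C := S ∩ K with hC
  have hCS : C ⊆ S := Finset.inter_subset_left
  have hCK : C ⊆ K := Finset.inter_subset_right
  have hCclique : ∀ x ∈ C, ∀ y ∈ C, x ≠ y → G.Adj x y := fun x hx y hy hne =>
    hclique (hCK hx) (hCK hy) hne
  have hCc : C.card ≤ c := clique_card_le hCS hCclique hS
  have hsub : S ⊆ splitTC G c I C := by
    intro v hvS
    unfold splitTC
    rcases hcover v with hvK | hvI
    · have : v ∈ C := Finset.mem_inter.mpr ⟨hvS, hvK⟩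
      split <;> exact Finset.mem_union_left _ this
    · split_ifs with hlt
      · exact Finset.mem_union_right _ hvI
      · refine Finset.mem_union_right _ (Finset.mem_filter.mpr ⟨hvI, ?_⟩)
        intro hall
        have hvC : v ∉ C := fun hvc => (Finset.disjoint_left.mp hdisj (hCK hvc)) hvI
        have hD : insert v C ⊆ S := Finset.insert_subset hvS hCS
        have hclD : ∀ x ∈ insert v C, ∀ y ∈ insert v C, x ≠ y → G.Adj x y := by
          intro x hx y hy hne
          rw [Finset.mem_insert] at hx hy
          rcases hx with rfl | hx
          · rcases hy with rfl | hy
            · exact absurd rfl hne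
            · exact (hall y hy).symm
          · rcases hy with rfl | hy
            · exact hall x hx
            · exact hCclique x hx y hy hne
        have hle := clique_card_le hD hclD hS
        rw [Finset.card_insert_of_notMem hvC] at hle
        omega
  refine ⟨hsub, ?_⟩
  have hTcol : ColSet G c (splitTC G c I C) := by
    by_cases hlt : C.card < c
    · unfold splitTC
      rw [if_pos hlt]
      set e := C.equivFin with he
      refine ⟨SimpleGraph.Coloring.mk
        (fun v => if h : v.1 ∈ C then (e ⟨v.1, h⟩).castLE hlt.le else ⟨C.card, hlt⟩) ?_⟩
      rintro ⟨x, hx⟩ ⟨y, hy⟩ hadj heq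
      dsimp only at heq
      split_ifs at heq with hxC hyC hyC
      · have hval := congrArg Fin.val heq
        simp only [Fin.coe_castLE] at hval
        have := e.injective (Fin.ext hval)
        have hxy : x = y := congrArg Subtype.val this
        exact G.ne_of_adj hadj hxy
      · have hval := congrArg Fin.val heq
        simp only [Fin.coe_castLE] at hval
        exact absurd hval (Nat.ne_of_lt (e ⟨x, hxC⟩).isLt)
      · have hval := congrArg Fin.val heq
        simp only [Fin.coe_castLE] at hval
        exact absurd hval.symm (Nat.ne_of_lt (e ⟨y, hyC⟩).isLt)
      · have hxI : x ∈ I := (Finset.mem_union.mp (Finset.mem_coe.mp hx)).resolve_left hxC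
        have hyI : y ∈ I := (Finset.mem_union.mp (Finset.mem_coe.mp hy)).resolve_left hyC
        exact hindep x hxI y hyI hadj
    · have hceq : C.card = c := le_antisymm hCc (not_lt.mp hlt)
      unfold splitTC
      rw [if_neg hlt]
      set e := C.equivFin with he
      have hex : ∀ u ∈ I.filter (fun u => ¬ ∀ v ∈ C, G.Adj v u),
          ∃ w, w ∈ C ∧ ¬ G.Adj w u := by
        intro u hu
        have h2 := (Finset.mem_filter.mp hu).2
        push_neg at h2
        obtain ⟨w, hw1, hw2⟩ := h2
        exact ⟨w, hw1, hw2⟩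
      refine ⟨SimpleGraph.Coloring.mk
        (fun v => if h : v.1 ∈ C then (e ⟨v.1, h⟩).cast hceq else
          (e ⟨(hex v.1 ((Finset.mem_union.mp (Finset.mem_coe.mp v.2)).resolve_left h)).choose,
            (hex v.1 ((Finset.mem_union.mp (Finset.mem_coe.mp v.2)).resolve_left h)).choose_spec.1⟩).cast hceq) ?_⟩
      rintro ⟨x, hx⟩ ⟨y, hy⟩ hadj heq
      dsimp only at heq
      split_ifs at heq with hxC hyC hyC
      · have hval := congrArg Fin.val heq
        simp only [Fin.coe_cast] at hval
        have := e.injective (Fin.ext hval)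
        exact G.ne_of_adj hadj (congrArg Subtype.val this)
      · have hyF := (Finset.mem_union.mp (Finset.mem_coe.mp hy)).resolve_left hyC
        have hspec := (hex y hyF).choose_spec
        have hval := congrArg Fin.val heq
        simp only [Fin.coe_cast] at hval
        have := e.injective (Fin.ext hval)
        have hxw : x = (hex y hyF).choose := congrArg Subtype.val this
        exact hspec.2 (hxw ▸ hadj)
      · have hxF := (Finset.mem_union.mp (Finset.mem_coe.mp hx)).resolve_left hxC
        have hspec := (hex x hxF).choose_spec
        have hval := congrArg Fin.val heq
        simp only [Fin.coe_cast] at hval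
        have := e.injective (Fin.ext hval)
        have hyw : (hex x hxF).choose = y := congrArg Subtype.val this
        exact hspec.2 (hyw ▸ hadj.symm)
      · have hxF := (Finset.mem_union.mp (Finset.mem_coe.mp hx)).resolve_left hxC
        have hyF := (Finset.mem_union.mp (Finset.mem_coe.mp hy)).resolve_left hyC
        exact hindep x (Finset.mem_filter.mp hxF).1 y (Finset.mem_filter.mp hyF).1 hadj
  exact tarReach_of_subset G c k _ S _ rfl hsub hTcol hk
end
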